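/- arXiv:2102.12910 — 2 statements merged into one kernel-verified Lean document; each statement's English description precedes it below -/
import Mathlib

section
/- For every n ∈ ℕ there exists a constant C = C(n) > 0 such that the following holds. Let S ⊂ ℝ^d be a closed set and n < d. Then α(x,r)² ≤ C · ã(x,r) for every x ∈ S and every r > 0. -/
open Metric Set Finset
open scoped RealInnerProductSpace
set_option maxHeartbeats 4000000

noncomputable section

/-- Gromov–Hausdorff distance via metrics on the disjoint union. -/
def ghDist (X Y : Type) [MetricSpace X] [MetricSpace Y] : ℝ :=
  sInf {r : ℝ | ∃ M : MetricSpace (X ⊕ Y),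
    (∀ a b : X, @dist _ M.toPseudoMetricSpace.toDist (Sum.inl a) (Sum.inl b) = dist a b) ∧
    (∀ a b : Y, @dist _ M.toPseudoMetricSpace.toDist (Sum.inr a) (Sum.inr b) = dist a b) ∧
    @Metric.hausdorffDist _ M.toPseudoMetricSpace (Set.range Sum.inl) (Set.range Sum.inr) ≤ r}

def planeHD {d : ℕ} (S : Set (EuclideanSpace ℝ (Fin d)))
    (Γ : AffineSubspace ℝ (EuclideanSpace ℝ (Fin d)))
    (x : EuclideanSpace ℝ (Fin d)) (r : ℝ) : ℝ :=
  r⁻¹ * Metric.hausdorffDist (S ∩ Metric.ball x r)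
    ((Γ : Set (EuclideanSpace ℝ (Fin d))) ∩ Metric.ball x r)

def planeSup {d : ℕ} (S : Set (EuclideanSpace ℝ (Fin d)))
    (Γ : AffineSubspace ℝ (EuclideanSpace ℝ (Fin d)))
    (x : EuclideanSpace ℝ (Fin d)) (r : ℝ) : ℝ :=
  r⁻¹ * sSup ((fun y => Metric.infDist y (Γ : Set (EuclideanSpace ℝ (Fin d)))) ''
    (S ∩ Metric.ball x r))

def alphaNum (n : ℕ) {d : ℕ} (S : Set (EuclideanSpace ℝ (Fin d)))
    (x : EuclideanSpace ℝ (Fin d)) (r : ℝ) : ℝ :=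
  sInf {t : ℝ | ∃ Γ : AffineSubspace ℝ (EuclideanSpace ℝ (Fin d)),
    x ∈ Γ ∧ Module.finrank ℝ Γ.direction = n ∧ t = planeHD S Γ x r}

def betaNum (n : ℕ) {d : ℕ} (S : Set (EuclideanSpace ℝ (Fin d)))
    (x : EuclideanSpace ℝ (Fin d)) (r : ℝ) : ℝ :=
  sInf {t : ℝ | ∃ Γ : AffineSubspace ℝ (EuclideanSpace ℝ (Fin d)),
    x ∈ Γ ∧ Module.finrank ℝ Γ.direction = n ∧ t = planeSup S Γ x r}

def aTilde (n : ℕ) {d : ℕ} (S : Set (EuclideanSpace ℝ (Fin d)))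
    (x : EuclideanSpace ℝ (Fin d)) (r : ℝ) : ℝ :=
  r⁻¹ * ghDist (↥(S ∩ Metric.ball x r)) (↥(Metric.ball (0 : EuclideanSpace ℝ (Fin n)) r))

def bTilde (n : ℕ) {d : ℕ} (S : Set (EuclideanSpace ℝ (Fin d)))
    (x : EuclideanSpace ℝ (Fin d)) (r : ℝ) : ℝ :=
  r⁻¹ * sInf {δ : ℝ | 0 < δ ∧
    ∃ f : ↥(S ∩ Metric.ball x r) → ↥(Metric.ball (0 : EuclideanSpace ℝ (Fin n)) r),
      ∀ a b, |dist (f a) (f b) - dist a b| < δ}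

def alphaSeq (n : ℕ) {d : ℕ} (S : Set (EuclideanSpace ℝ (Fin d))) (i : ℤ) : ℝ :=
  sSup ((fun x => alphaNum n S x ((2 : ℝ) ^ (-i))) '' (S ∩ Metric.ball 0 1))

def betaSeq (n : ℕ) {d : ℕ} (S : Set (EuclideanSpace ℝ (Fin d))) (i : ℤ) : ℝ :=
  sSup ((fun x => betaNum n S x ((2 : ℝ) ^ (-i))) '' (S ∩ Metric.ball 0 1))

def aTildeSeq (n : ℕ) {d : ℕ} (S : Set (EuclideanSpace ℝ (Fin d))) (ε : ℝ) (i : ℤ) : ℝ :=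
  sSup ((fun x => aTilde n S x ((2 : ℝ) ^ (-i))) '' (S ∩ Metric.ball 0 (1 - ε)))

def bTildeSeq (n : ℕ) {d : ℕ} (S : Set (EuclideanSpace ℝ (Fin d))) (ε : ℝ) (i : ℤ) : ℝ :=
  sSup ((fun x => bTilde n S x ((2 : ℝ) ^ (-i))) '' (S ∩ Metric.ball 0 (1 - ε)))

def planeDist {d : ℕ} (Γ₁ Γ₂ : AffineSubspace ℝ (EuclideanSpace ℝ (Fin d))) : ℝ :=
  Metric.hausdorffDist
    ((Γ₁.direction : Set (EuclideanSpace ℝ (Fin d))) ∩ Metric.closedBall 0 1)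
    ((Γ₂.direction : Set (EuclideanSpace ℝ (Fin d))) ∩ Metric.closedBall 0 1)

def simplexVol (n : ℕ) {d : ℕ} (p : Fin (n + 1) → EuclideanSpace ℝ (Fin d)) : ℝ :=
  Real.sqrt (Matrix.det (Matrix.of fun i j : Fin n =>
    (inner ℝ (p i.succ - p 0) (p j.succ - p 0) : ℝ))) / (n.factorial : ℝ)

def IsRealizingPlane (n : ℕ) {d : ℕ} (C' : ℝ) (S : Set (EuclideanSpace ℝ (Fin d)))
    (Γ : AffineSubspace ℝ (EuclideanSpace ℝ (Fin d))) (x : EuclideanSpace ℝ (Fin d))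
    (r : ℝ) : Prop :=
  x ∈ Γ ∧ Module.finrank ℝ Γ.direction = n ∧ planeSup S Γ x r = betaNum n S x r ∧
    planeHD S Γ x r ≤ C' * alphaNum n S x r

section helpers
variable {E : Type*} [NormedAddCommGroup E] [InnerProductSpace ℝ E]

lemma my_inner_expand {n : ℕ} (u : Fin n → E) (t t' : Fin n → ℝ) :
    ⟪∑ i, t i • u i, ∑ j, t' j • u j⟫ = ∑ i, ∑ j, t i * t' j * ⟪u i, u j⟫ := by
  rw [sum_inner]
  refine Finset.sum_congr rfl fun i _ => ?_
  rw [inner_sum]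
  refine Finset.sum_congr rfl fun j _ => ?_
  rw [real_inner_smul_left, real_inner_smul_right]; ring

lemma my_gram_bound {n : ℕ} (u : Fin n → E) {s ρ : ℝ} (hρ : 0 ≤ ρ)
    (hG : ∀ i j, |⟪u i, u j⟫ - (if i = j then s^2 else 0)| ≤ ρ) (t : Fin n → ℝ) :
    |‖∑ i, t i • u i‖^2 - s^2 * ∑ i, t i^2| ≤ n * ρ * ∑ i, t i^2 := by
  have h1 : ‖∑ i, t i • u i‖^2 = ∑ i, ∑ j, t i * t j * ⟪u i, u j⟫ := by
    rw [← real_inner_self_eq_norm_sq, my_inner_expand]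
  have h2 : s^2 * ∑ i, t i^2 = ∑ i, ∑ j, t i * t j * (if i = j then s^2 else 0) := by
    rw [Finset.mul_sum]
    refine Finset.sum_congr rfl fun i _ => ?_
    calc s^2 * t i ^2 = ∑ j, (if i = j then t i * t j * s^2 else 0) := by
          rw [Finset.sum_ite_eq]; simp; ring
      _ = ∑ j, t i * t j * (if i = j then s^2 else 0) := by
          refine Finset.sum_congr rfl fun j _ => ?_; split <;> ring
  rw [h1, h2, ← Finset.sum_sub_distrib]
  have h3 : ∀ i ∈ Finset.univ (α := Fin n),
      |∑ j, t i * t j * ⟪u i, u j⟫ - ∑ j, t i * t j * (if i = j then s^2 else 0)|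
        ≤ ∑ j, |t i| * |t j| * ρ := by
    intro i _
    rw [← Finset.sum_sub_distrib]
    refine (Finset.abs_sum_le_sum_abs _ _).trans (Finset.sum_le_sum fun j _ => ?_)
    rw [← mul_sub, abs_mul, abs_mul, mul_assoc]
    exact le_of_le_of_eq (mul_le_mul_of_nonneg_left (mul_le_mul_of_nonneg_left (hG i j) (abs_nonneg _))
      (abs_nonneg _)) (by ring)
  refine (Finset.abs_sum_le_sum_abs _ _).trans ((Finset.sum_le_sum h3).trans ?_)
  have h4 : ∑ i, ∑ j, |t i| * |t j| * ρ = (∑ i, |t i|)^2 * ρ := by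
    rw [sq, Finset.sum_mul_sum, Finset.sum_mul]
    exact Finset.sum_congr rfl fun i _ => by rw [Finset.sum_mul]
  rw [h4]
  have h5 : (∑ i, |t i|)^2 ≤ n * ∑ i, t i^2 := by
    have := sq_sum_le_card_mul_sum_sq (s := Finset.univ) (f := fun i : Fin n => |t i|)
    simpa [sq_abs] using this
  calc (∑ i, |t i|)^2 * ρ ≤ (n * ∑ i, t i^2) * ρ := mul_le_mul_of_nonneg_right h5 hρ
    _ = n * ρ * ∑ i, t i^2 := by ring

lemma my_linindep {n : ℕ} (u : Fin n → E) {s ρ : ℝ} (hρ : 0 ≤ ρ) (hnρ : n * ρ < s^2)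
    (hG : ∀ i j, |⟪u i, u j⟫ - (if i = j then s^2 else 0)| ≤ ρ) :
    LinearIndependent ℝ u := by
  rw [Fintype.linearIndependent_iff]
  intro g hg i
  have h := my_gram_bound u hρ hG g
  rw [hg] at h
  simp only [norm_zero] at h
  have hsum : (0:ℝ) ≤ ∑ i, g i ^ 2 := Finset.sum_nonneg fun i _ => sq_nonneg _
  have h0 : ∑ j, g j ^2 = 0 := by
    refine le_antisymm ?_ hsum
    nlinarith [(abs_le.1 h).1, sub_pos.2 hnρ]
  have := (Finset.sum_eq_zero_iff_of_nonneg (fun i _ => sq_nonneg (g i))).1 h0 i (Finset.mem_univ i)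
  exact pow_eq_zero_iff (n := 2) (by norm_num) |>.1 this

lemma my_proj {n : ℕ} (u : Fin n → E) {s ρ : ℝ} (hρ : 0 ≤ ρ) (hs : 0 < s)
    (hG : ∀ i j, |⟪u i, u j⟫ - (if i = j then s^2 else 0)| ≤ ρ) (v : E) :
    (∑ i, ⟪v, u i⟫^2 ≤ (s^2 + n*ρ) * ‖v‖^2) ∧
    ∃ w ∈ Submodule.span ℝ (Set.range u), ‖w‖ ≤ ‖v‖ ∧
      ‖v - w‖^2 ≤ ‖v‖^2 - (∑ i, ⟪v, u i⟫^2)/(s^2 + n*ρ) := by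
  set c : Fin n → ℝ := fun i => ⟪v, u i⟫ with hc
  set K : ℝ := ∑ i, c i ^ 2 with hK
  set W : E := ∑ i, c i • u i with hW
  have hA : (0:ℝ) < s^2 + n*ρ := by positivity
  have hKnn : 0 ≤ K := Finset.sum_nonneg fun i _ => sq_nonneg _
  have hvW : ⟪v, W⟫ = K := by
    rw [hW, inner_sum]
    exact Finset.sum_congr rfl fun i _ => by rw [real_inner_smul_right]; ring
  have hW2 : ‖W‖^2 ≤ (s^2 + n*ρ) * K := by
    have h := my_gram_bound u hρ hG c
    nlinarith [abs_le.1 h]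
  have hi : K ≤ (s^2 + n*ρ) * ‖v‖^2 := by
    rcases eq_or_lt_of_le hKnn with h0 | h0
    · nlinarith
    · have hcs : K^2 ≤ ‖v‖^2 * ‖W‖^2 := by
        have := abs_real_inner_le_norm v W
        rw [hvW] at this
        have h2 : K ≤ ‖v‖ * ‖W‖ := le_trans (le_abs_self _) this
        nlinarith [norm_nonneg v, norm_nonneg W]
      nlinarith
  refine ⟨hi, (s^2+n*ρ)⁻¹ • W, ?_, ?_, ?_⟩
  · exact Submodule.smul_mem _ _ (Submodule.sum_mem _ fun i _ =>
      Submodule.smul_mem _ _ (Submodule.subset_span ⟨i, rfl⟩))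
  · have hw2 : ‖(s^2+n*ρ)⁻¹ • W‖^2 ≤ ‖v‖^2 := by
      rw [norm_smul, mul_pow]
      have h6 : ‖(s^2+n*ρ)⁻¹‖^2 = ((s^2+n*ρ)^2)⁻¹ := by
        rw [Real.norm_eq_abs, abs_of_pos (by positivity), ← inv_pow]
      rw [h6, inv_mul_le_iff₀ (by positivity)]
      calc ‖W‖^2 ≤ (s^2+n*ρ) * K := hW2
        _ ≤ (s^2+n*ρ) * ((s^2+n*ρ) * ‖v‖^2) := mul_le_mul_of_nonneg_left hi (le_of_lt hA)
        _ = (s^2+n*ρ)^2 * ‖v‖^2 := by ring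
    nlinarith [norm_nonneg ((s^2+n*ρ)⁻¹ • W), norm_nonneg v]
  · rw [norm_sub_sq_real, real_inner_smul_right, hvW, norm_smul, mul_pow,
      Real.norm_eq_abs, abs_of_pos (inv_pos.2 hA)]
    have h1 : ((s^2+n*ρ)⁻¹)^2 * ‖W‖^2 ≤ (s^2+n*ρ)⁻¹ * K :=
      calc ((s^2+n*ρ)⁻¹)^2 * ‖W‖^2 ≤ ((s^2+n*ρ)⁻¹)^2 * ((s^2+n*ρ)*K) :=
            mul_le_mul_of_nonneg_left hW2 (by positivity)
        _ = (s^2+n*ρ)⁻¹ * K * ((s^2+n*ρ)⁻¹ * (s^2+n*ρ)) := by ring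
        _ = (s^2+n*ρ)⁻¹ * K := by rw [inv_mul_cancel₀ (ne_of_gt hA)]; ring
    rw [div_eq_inv_mul]
    linarith

lemma my_polar (a b : E) : ⟪a, b⟫ = (‖a‖^2 + ‖b‖^2 - ‖a - b‖^2)/2 := by
  have := norm_sub_sq_real a b
  linarith

end helpers

lemma my_eunorm {n : ℕ} (y : EuclideanSpace ℝ (Fin n)) : ‖y‖^2 = ∑ i, (y i)^2 := by
  rw [EuclideanSpace.norm_eq, Real.sq_sqrt (Finset.sum_nonneg fun i _ => sq_nonneg _)]
  exact Finset.sum_congr rfl fun i _ => by rw [Real.norm_eq_abs, sq_abs]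

lemma my_coord_le {n : ℕ} (y : EuclideanSpace ℝ (Fin n)) (i : Fin n) : (y i)^2 ≤ ‖y‖^2 := by
  rw [my_eunorm]
  exact Finset.single_le_sum (fun j _ => sq_nonneg (y j)) (Finset.mem_univ i)

lemma my_abs_coord {n : ℕ} (y : EuclideanSpace ℝ (Fin n)) (i : Fin n) : |y i| ≤ ‖y‖ := by
  have h := Real.sqrt_le_sqrt (my_coord_le y i)
  rwa [Real.sqrt_sq_eq_abs, Real.sqrt_sq (norm_nonneg _)] at h

lemma my_inner_single {n : ℕ} (v : EuclideanSpace ℝ (Fin n)) (i : Fin n) (s : ℝ) :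
    ⟪v, s • EuclideanSpace.single i (1:ℝ)⟫ = s * v i := by
  rw [real_inner_smul_right, EuclideanSpace.inner_single_right]
  simp

lemma my_single_inner {n : ℕ} (v : EuclideanSpace ℝ (Fin n)) (i : Fin n) (s : ℝ) :
    ⟪s • EuclideanSpace.single i (1:ℝ), v⟫ = s * v i := by
  rw [real_inner_comm, my_inner_single]

lemma my_yy {n : ℕ} (i j : Fin n) (s : ℝ) :
    ⟪s • EuclideanSpace.single i (1:ℝ), s • EuclideanSpace.single j (1:ℝ)⟫
      = if i = j then s^2 else 0 := by
  rw [my_single_inner]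
  by_cases h : i = j <;>
    simp [EuclideanSpace.single_apply, h, smul_eq_mul] <;> ring

lemma my_sq_diff {p q c m : ℝ} (h : |p - q| ≤ c) (hp : 0 ≤ p) (hq : 0 ≤ q)
    (hpm : p ≤ m) (hqm : q ≤ m) : |p^2 - q^2| ≤ 2*m*c := by
  rw [abs_le] at *
  constructor <;> nlinarith

lemma my_core (n d : ℕ) (S : Set (EuclideanSpace ℝ (Fin d))) (x : EuclideanSpace ℝ (Fin d))
    (hx : x ∈ S) (r δ : ℝ) (hr : 0 < r) (hδ : 0 < δ) (hδr : 800*((n:ℝ)+1)*δ ≤ r)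
    (R : EuclideanSpace ℝ (Fin d) → EuclideanSpace ℝ (Fin n) → Prop)
    (Hc : ∀ a y a' y', R a y → R a' y' → |dist a a' - dist y y'| ≤ 2*δ)
    (HX : ∀ a ∈ S ∩ ball x r, ∃ y : EuclideanSpace ℝ (Fin n), ‖y‖ < r ∧ R a y)
    (HY : ∀ y : EuclideanSpace ℝ (Fin n), ‖y‖ < r → ∃ a ∈ S ∩ ball x r, R a y) :
    ∃ Γ : AffineSubspace ℝ (EuclideanSpace ℝ (Fin d)), x ∈ Γ ∧
      Module.finrank ℝ Γ.direction = n ∧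
      Metric.hausdorffDist (S ∩ ball x r) ((Γ : Set _) ∩ ball x r) ≤
        Real.sqrt (500*((n:ℝ)+1)*r*δ) := by
  have hn0 : (0:ℝ) ≤ n := Nat.cast_nonneg n
  have hδr' : δ ≤ r/800 := by nlinarith [mul_nonneg hn0 hδ.le]
  have hxX : x ∈ S ∩ ball x r := ⟨hx, mem_ball_self hr⟩
  obtain ⟨yx, hyxr, hRx⟩ := HX x hxX
  have hyx : ‖yx‖ ≤ 3*δ := by
    rcases eq_or_ne yx 0 with h0 | h0
    · rw [h0, norm_zero]; linarith
    · have hny : 0 < ‖yx‖ := norm_pos_iff.2 h0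
      set y' : EuclideanSpace ℝ (Fin n) := ((r - δ)/‖yx‖) • (-yx) with hy'
      have hn1 : ‖y'‖ = r - δ := by
        rw [hy', norm_smul, norm_neg, Real.norm_eq_abs,
          abs_of_nonneg (div_nonneg (by linarith) hny.le), div_mul_cancel₀ _ (ne_of_gt hny)]
      obtain ⟨a, haX, hRa⟩ := HY y' (by rw [hn1]; linarith)
      have h1 := abs_le.1 (Hc a y' x yx hRa hRx)
      have h2 : dist y' yx = (r - δ) + ‖yx‖ := by
        rw [dist_eq_norm]
        have he : y' - yx = (-((r-δ)/‖yx‖) - 1) • yx := by rw [hy']; module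
        rw [he, norm_smul, Real.norm_eq_abs,
          abs_of_nonpos (by nlinarith [div_nonneg (show (0:ℝ) ≤ r - δ by linarith) hny.le])]
        have : (-(-((r - δ) / ‖yx‖) - 1)) * ‖yx‖ = (r-δ)/‖yx‖*‖yx‖ + ‖yx‖ := by ring
        rw [this, div_mul_cancel₀ _ (ne_of_gt hny)]
      have h3 : dist a x < r := mem_ball.1 haX.2
      rw [h2] at h1
      linarith [h1.1]
  have Hd : ∀ a y, R a y → |dist a x - ‖y‖| ≤ 5*δ := by
    intro a y h
    have h1 := abs_le.1 (Hc a y x yx h hRx)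
    have h2 : |dist y yx - ‖y‖| ≤ 3*δ := by
      rw [dist_eq_norm]
      calc |‖y - yx‖ - ‖y‖| ≤ ‖(y - yx) - y‖ := abs_norm_sub_norm_le _ _
        _ = ‖yx‖ := by rw [show (y - yx) - y = -yx by abel, norm_neg]
        _ ≤ 3*δ := hyx
    have h2' := abs_le.1 h2
    rw [abs_le]
    constructor <;> linarith
  have HInner : ∀ a y a' y', a ∈ S ∩ ball x r → a' ∈ S ∩ ball x r → R a y → R a' y' →
      |⟪a - x, a' - x⟫ - ⟪y, y'⟫| ≤ 15*r*δ := by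
    intro a y a' y' ha ha' hR hR'
    have hax : ‖a - x‖ < r := by rw [← dist_eq_norm]; exact mem_ball.1 ha.2
    have hax' : ‖a' - x‖ < r := by rw [← dist_eq_norm]; exact mem_ball.1 ha'.2
    have hd1 : |‖a - x‖ - ‖y‖| ≤ 5*δ := by
      have := Hd a y hR; rwa [dist_eq_norm] at this
    have hd2 : |‖a' - x‖ - ‖y'‖| ≤ 5*δ := by
      have := Hd a' y' hR'; rwa [dist_eq_norm] at this
    have hd3 : |‖a - a'‖ - ‖y - y'‖| ≤ 2*δ := by
      have := Hc a y a' y' hR hR'; rwa [dist_eq_norm, dist_eq_norm] at this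
    have hy1 : ‖y‖ ≤ r + 5*δ := by have := abs_le.1 hd1; linarith
    have hy2 : ‖y'‖ ≤ r + 5*δ := by have := abs_le.1 hd2; linarith
    have haa : ‖a - a'‖ ≤ 2*r := by
      calc ‖a - a'‖ = ‖(a - x) - (a' - x)‖ := by abel_nf
        _ ≤ ‖a - x‖ + ‖a' - x‖ := norm_sub_le _ _
        _ ≤ 2*r := by linarith
    have hyy' : ‖y - y'‖ ≤ 2*r + 2*δ := by have := abs_le.1 hd3; linarith
    have e1 := my_sq_diff hd1 (norm_nonneg _) (norm_nonneg _)
      (le_trans hax.le (by linarith)) hy1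
    have e2 := my_sq_diff hd2 (norm_nonneg _) (norm_nonneg _)
      (le_trans hax'.le (by linarith)) hy2
    have e3 := my_sq_diff hd3 (norm_nonneg _) (norm_nonneg _)
      (le_trans haa (by linarith)) hyy'
    have hsub : (a - x) - (a' - x) = a - a' := by abel
    rw [my_polar, my_polar, hsub]
    have e1' := abs_le.1 e1
    have e2' := abs_le.1 e2
    have e3' := abs_le.1 e3
    have hδ2 : δ*δ ≤ r*δ/800 := by nlinarith [mul_le_mul_of_nonneg_left hδr' hδ.le]
    rw [abs_le]
    constructor <;> nlinarith [e1'.1, e1'.2, e2'.1, e2'.2, e3'.1, e3'.2, hδ2, hδ.le, hr.le]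
  -- the sample points and the plane
  have hs : (0:ℝ) < r/2 := by linarith
  set yv : Fin n → EuclideanSpace ℝ (Fin n) := fun i => (r/2) • EuclideanSpace.single i (1:ℝ)
    with hyv
  have hyn : ∀ i, ‖yv i‖ = r/2 := fun i => by
    rw [hyv]
    simp only [norm_smul, EuclideanSpace.norm_single, Real.norm_eq_abs, norm_one,
      abs_of_pos hs, mul_one]
  have hpex : ∀ i, ∃ a ∈ S ∩ ball x r, R a (yv i) := fun i => HY _ (by rw [hyn]; linarith)
  choose p hpX hpR using hpex
  set u : Fin n → EuclideanSpace ℝ (Fin d) := fun i => p i - x with hu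
  have hρ : (0:ℝ) ≤ 15*r*δ := by positivity
  have hG : ∀ i j, |⟪u i, u j⟫ - (if i = j then (r/2)^2 else 0)| ≤ 15*r*δ := by
    intro i j
    have h := HInner (p i) (yv i) (p j) (yv j) (hpX i) (hpX j) (hpR i) (hpR j)
    rwa [my_yy] at h
  have hnρ : (n:ℝ)*(15*r*δ) ≤ (r/2)^2/10 := by
    have hrr := mul_le_mul_of_nonneg_left hδr hr.le
    nlinarith [mul_nonneg hr.le hδ.le, mul_nonneg hn0 (mul_nonneg hr.le hδ.le)]
  have hlin := my_linindep u hρ (lt_of_le_of_lt hnρ (by nlinarith)) hG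
  set V := Submodule.span ℝ (Set.range u) with hVdef
  set Γ := AffineSubspace.mk' x V with hΓ
  have hxΓ : x ∈ Γ := AffineSubspace.self_mem_mk' x V
  have hrank : Module.finrank ℝ Γ.direction = n := by
    rw [hΓ, AffineSubspace.direction_mk', hVdef, finrank_span_eq_card hlin]
    simp
  have hmemΓ : ∀ z, z ∈ Γ ↔ z - x ∈ V := fun z => by
    rw [hΓ, AffineSubspace.mem_mk', vsub_eq_sub]
  refine ⟨Γ, hxΓ, hrank, ?_⟩
  have hApos : (0:ℝ) < (r/2)^2 + n*(15*r*δ) := by positivity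
  refine Metric.hausdorffDist_le_of_mem_dist (Real.sqrt_nonneg _) ?_ ?_
  · -- every point of S ∩ ball is close to the plane
    intro q hq
    obtain ⟨yq, hyqr, hRq⟩ := HX q hq
    have hvr : ‖q - x‖ < r := by rw [← dist_eq_norm]; exact mem_ball.1 hq.2
    obtain ⟨hK, w, hwV, hwn, hvw⟩ := my_proj u hρ hs hG (q - x)
    have hb : ∀ i, |⟪q - x, u i⟫ - (r/2) * yq i| ≤ 15*r*δ := by
      intro i
      have h := HInner q yq (p i) (yv i) hq (hpX i) hRq (hpR i)
      rwa [my_inner_single] at h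
    have hKlow : (r/2)^2*‖yq‖^2 - (n:ℝ)*(30*(r/2)*r^2*δ) ≤ ∑ i, ⟪q - x, u i⟫^2 := by
      have hterm : ∀ i ∈ Finset.univ (α := Fin n),
          (r/2)^2*(yq i)^2 - 30*(r/2)*r^2*δ ≤ ⟪q - x, u i⟫^2 := by
        intro i _
        have h1 := abs_le.1 (hb i)
        have hyc := abs_le.1 (le_trans (my_abs_coord yq i) hyqr.le)
        have p1 : (0:ℝ) ≤ (r - yq i)*(15*r*δ - (⟪q - x, u i⟫ - (r/2)*yq i)) :=
          mul_nonneg (by linarith [hyc.2]) (by linarith [h1.2])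
        have p2 : (0:ℝ) ≤ (r + yq i)*(15*r*δ + (⟪q - x, u i⟫ - (r/2)*yq i)) :=
          mul_nonneg (by linarith [hyc.1]) (by linarith [h1.1])
        have key : (0:ℝ) ≤ r * ((r - yq i)*(15*r*δ - (⟪q - x, u i⟫ - (r/2)*yq i))
            + (r + yq i)*(15*r*δ + (⟪q - x, u i⟫ - (r/2)*yq i))) :=
          mul_nonneg hr.le (by linarith)
        nlinarith [key, sq_nonneg (⟪q - x, u i⟫ - (r/2)*yq i)]
      have hsum := Finset.sum_le_sum hterm
      rw [Finset.sum_sub_distrib, Finset.sum_const, Finset.card_univ] at hsum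
      calc (r/2)^2*‖yq‖^2 - (n:ℝ)*(30*(r/2)*r^2*δ)
          = ∑ i, (r/2)^2*(yq i)^2 - (n:ℝ)*(30*(r/2)*r^2*δ) := by
            rw [← Finset.mul_sum, ← my_eunorm]
        _ ≤ ∑ i, ⟪q - x, u i⟫^2 := by
            simpa using hsum
    have hdq : |‖q - x‖ - ‖yq‖| ≤ 5*δ := by
      have := Hd q yq hRq; rwa [dist_eq_norm] at this
    have hfinal : ‖(q - x) - w‖^2 ≤ 500*((n:ℝ)+1)*r*δ := by
      have h1 : ‖q - x‖^2 - 500*((n:ℝ)+1)*r*δ ≤ (∑ i, ⟪q - x, u i⟫^2)/((r/2)^2 + n*(15*r*δ)) := by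
        rw [le_div_iff₀ hApos]
        have e1 := abs_le.1 hdq
        have hvy : ‖q - x‖ + ‖yq‖ ≤ 2*r := by linarith
        have hd5 : ‖q - x‖^2 - ‖yq‖^2 ≤ 10*r*δ := by
          nlinarith [e1.2, hvy, hδ.le, hr.le, norm_nonneg (q - x), norm_nonneg yq]
        have hv2 : ‖q - x‖^2 ≤ r^2 := by nlinarith [norm_nonneg (q - x), hvr, hr.le]
        have m1 : (r/2)^2 * (‖q - x‖^2 - ‖yq‖^2) ≤ (r/2)^2 * (10*r*δ) :=
          mul_le_mul_of_nonneg_left hd5 (by positivity)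
        have m2 : 15*(n:ℝ)*r*δ*‖q - x‖^2 ≤ 15*(n:ℝ)*r*δ*r^2 :=
          mul_le_mul_of_nonneg_left hv2 (by positivity)
        have ta : (0:ℝ) ≤ (500*((n:ℝ)+1)*r*δ) * ((n:ℝ)*(15*r*δ)) := by positivity
        have hb1 : (0:ℝ) ≤ r^3*δ := by positivity
        have hb2 : (0:ℝ) ≤ (n:ℝ)*(r^3*δ) := by positivity
        linarith [hKlow, m1, m2, ta, hb1, hb2]
      linarith [hvw]
    refine ⟨x + w, ⟨?_, ?_⟩, ?_⟩
    · exact (hmemΓ _).2 (by simpa using hwV)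
    · rw [mem_ball, dist_eq_norm]
      simpa using lt_of_le_of_lt hwn hvr
    · have hqw : q - (x + w) = (q - x) - w := by abel
      rw [dist_eq_norm, hqw]
      have h2 := Real.sqrt_le_sqrt hfinal
      rwa [Real.sqrt_sq (norm_nonneg _)] at h2
  · -- every point of the plane ∩ ball is close to S
    intro z hz
    obtain ⟨hzΓ, hzb⟩ := hz
    have hvV : z - x ∈ V := (hmemΓ z).1 hzΓ
    have hvr : ‖z - x‖ < r := by rw [← dist_eq_norm]; exact mem_ball.1 hzb
    rw [hVdef] at hvV
    obtain ⟨lam, hlam⟩ := (Submodule.mem_span_range_iff_exists_fun ℝ).1 hvV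
    have hgram := my_gram_bound u hρ hG lam
    rw [hlam] at hgram
    have hsumnn : (0:ℝ) ≤ ∑ i, lam i^2 := Finset.sum_nonneg fun i _ => sq_nonneg _
    have hlam2 : ∑ i, lam i^2 ≤ 5 := by
      have hg := abs_le.1 hgram
      nlinarith [hvr, norm_nonneg (z - x), mul_le_mul_of_nonneg_right hnρ hsumnn]
    have hlami : ∀ i, |lam i| ≤ 3 := by
      intro i
      have h1 : lam i^2 ≤ 5 :=
        le_trans (Finset.single_le_sum (fun j _ => sq_nonneg (lam j)) (Finset.mem_univ i)) hlam2
      rw [abs_le]; constructor <;> nlinarith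
    obtain ⟨θ, hθ0, hθ1, hθr⟩ : ∃ θ:ℝ, 7/8 ≤ θ ∧ θ ≤ 1 ∧ θ*r = r - 100*((n:ℝ)+1)*δ := by
      refine ⟨1 - 100*((n:ℝ)+1)*δ/r, ?_, ?_, by field_simp⟩
      · have : 100*((n:ℝ)+1)*δ/r ≤ 1/8 := by
          rw [div_le_iff₀ hr]; linarith
        linarith
      · have : (0:ℝ) ≤ 100*((n:ℝ)+1)*δ/r := by positivity
        linarith
    obtain ⟨hK, _⟩ := my_proj u hρ hs hG (z - x)
    set ty : EuclideanSpace ℝ (Fin n) := WithLp.toLp 2 (fun i => θ * ⟪z - x, u i⟫ / (r/2)) with hty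
    have htyn : ‖ty‖^2 * (r/2)^2 = θ^2 * ∑ i, ⟪z - x, u i⟫^2 := by
      rw [my_eunorm, Finset.sum_mul, Finset.mul_sum]
      refine Finset.sum_congr rfl fun i _ => ?_
      have : ty i = θ * ⟪z - x, u i⟫ / (r/2) := rfl
      rw [this]
      field_simp
    have htyle : ‖ty‖ ≤ ‖z - x‖ := by
      have h1θ2 : (1-θ)*r^2 = 100*((n:ℝ)+1)*δ*r := by
        have : (1-θ)*r^2 = ((1-θ)*r)*r := by ring
        rw [this, show (1-θ)*r = 100*((n:ℝ)+1)*δ by linarith [hθr]]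
      have hA2 : θ*((r/2)^2 + n*(15*r*δ)) ≤ (r/2)^2 := by
        nlinarith [h1θ2, hθ1, hθ0, mul_nonneg hn0 (mul_nonneg hr.le hδ.le),
          hδ.le, hr.le, mul_nonneg hr.le hδ.le]
      have hθsq : θ^2 ≤ θ := by nlinarith [hθ0, hθ1]
      have hθA : θ^2*((r/2)^2 + n*(15*r*δ)) ≤ (r/2)^2 :=
        le_trans (mul_le_mul_of_nonneg_right hθsq hApos.le) hA2
      have h2 : ‖ty‖^2*(r/2)^2 ≤ (r/2)^2*‖z - x‖^2 := by
        rw [htyn]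
        calc θ^2 * ∑ i, ⟪z - x, u i⟫^2 ≤ θ^2*(((r/2)^2 + n*(15*r*δ))*‖z - x‖^2) :=
              mul_le_mul_of_nonneg_left hK (sq_nonneg θ)
          _ = (θ^2*((r/2)^2 + n*(15*r*δ)))*‖z - x‖^2 := by ring
          _ ≤ (r/2)^2*‖z - x‖^2 := mul_le_mul_of_nonneg_right hθA (sq_nonneg _)
      have hrs : (0:ℝ) < (r/2)^2 := by positivity
      have h3 : ‖ty‖^2 ≤ ‖z - x‖^2 := by nlinarith [h2, hrs]
      have h4 := Real.sqrt_le_sqrt h3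
      rwa [Real.sqrt_sq (norm_nonneg _), Real.sqrt_sq (norm_nonneg _)] at h4
    obtain ⟨a, haX, hRa⟩ := HY ty (lt_of_le_of_lt htyle hvr)
    have haux : |‖a - x‖ - ‖ty‖| ≤ 5*δ := by
      have := Hd a ty hRa; rwa [dist_eq_norm] at this
    have hax : ‖a - x‖ ≤ ‖ty‖ + 5*δ := by linarith [(abs_le.1 haux).1, (abs_le.1 haux).2]
    have hbi : ∀ i, |⟪u i, a - x⟫ - θ * ⟪z - x, u i⟫| ≤ 15*r*δ := by
      intro i
      have h := HInner (p i) (yv i) a ty (hpX i) haX (hpR i) hRa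
      rw [my_single_inner] at h
      have he : (r/2) * ty i = θ * ⟪z - x, u i⟫ := by
        show (r/2) * (θ * ⟪z - x, u i⟫ / (r/2)) = θ * ⟪z - x, u i⟫
        field_simp
      rwa [he] at h
    have hvax : |⟪z - x, a - x⟫ - θ*‖z - x‖^2| ≤ 45*(n:ℝ)*r*δ := by
      have h1 : ⟪z - x, a - x⟫ = ∑ i, lam i * ⟪u i, a - x⟫ := by
        conv_lhs => rw [← hlam]
        rw [sum_inner]
        exact Finset.sum_congr rfl fun i _ => by rw [real_inner_smul_left]
      have h2 : θ*‖z - x‖^2 = ∑ i, lam i * (θ * ⟪z - x, u i⟫) := by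
        have hvv : ‖z - x‖^2 = ∑ i, lam i * ⟪z - x, u i⟫ := by
          rw [← real_inner_self_eq_norm_sq]
          nth_rewrite 2 [← hlam]
          rw [inner_sum]
          exact Finset.sum_congr rfl fun i _ => by rw [real_inner_smul_right]
        rw [hvv, Finset.mul_sum]
        exact Finset.sum_congr rfl fun i _ => by ring
      rw [h1, h2, ← Finset.sum_sub_distrib]
      calc |∑ i, (lam i * ⟪u i, a - x⟫ - lam i * (θ * ⟪z - x, u i⟫))|
          ≤ ∑ i, |lam i * ⟪u i, a - x⟫ - lam i * (θ * ⟪z - x, u i⟫)| :=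
            Finset.abs_sum_le_sum_abs _ _
        _ ≤ ∑ _i : Fin n, 3 * (15*r*δ) := by
            refine Finset.sum_le_sum fun i _ => ?_
            rw [← mul_sub, abs_mul]
            exact mul_le_mul (hlami i) (hbi i) (abs_nonneg _) (by norm_num)
        _ = 45*(n:ℝ)*r*δ := by
            rw [Finset.sum_const, Finset.card_univ]
            simp; ring
    refine ⟨a, haX, ?_⟩
    have hza : z - a = (z - x) - (a - x) := by abel
    rw [dist_eq_norm, hza]
    have hexp : ‖(z - x) - (a - x)‖^2 = ‖z - x‖^2 - 2*⟪z - x, a - x⟫ + ‖a - x‖^2 :=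
      norm_sub_sq_real _ _
    have hty2 : ‖ty‖^2 ≤ θ^2*‖z - x‖^2 + 60*(n:ℝ)*r*δ := by
      have h3 : θ^2 * ∑ i, ⟪z - x, u i⟫^2 ≤ θ^2*(((r/2)^2 + n*(15*r*δ))*‖z - x‖^2) :=
        mul_le_mul_of_nonneg_left hK (sq_nonneg θ)
      have hv2 : ‖z - x‖^2 ≤ r^2 := by nlinarith [norm_nonneg (z - x), hvr, hr.le]
      have hθsq1 : θ^2 ≤ 1 := by nlinarith [hθ0, hθ1]
      have q1 : θ^2*(15*(n:ℝ)*r*δ*‖z - x‖^2) ≤ 1*(15*(n:ℝ)*r*δ*r^2) :=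
        mul_le_mul hθsq1 (mul_le_mul_of_nonneg_left hv2 (by positivity))
          (by positivity) (by norm_num)
      have hchain : ‖ty‖^2*(r/2)^2 ≤ (θ^2*‖z - x‖^2 + 60*(n:ℝ)*r*δ)*(r/2)^2 := by
        nlinarith [htyn, h3, q1]
      exact le_of_mul_le_mul_right hchain (by positivity : (0:ℝ) < (r/2)^2)
    have h9 : (1-θ)^2*‖z - x‖^2 ≤ (100*((n:ℝ)+1)*δ)^2 := by
      have h1θr : (1-θ)*r = 100*((n:ℝ)+1)*δ := by linarith [hθr]
      have hc1 : (1-θ)*‖z - x‖ ≤ 100*((n:ℝ)+1)*δ := by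
        rw [← h1θr]
        exact mul_le_mul_of_nonneg_left hvr.le (by linarith)
      have hc0 : (0:ℝ) ≤ (1-θ)*‖z - x‖ := mul_nonneg (by linarith) (norm_nonneg _)
      nlinarith [mul_self_le_mul_self hc0 hc1]
    have hsq : ‖(z - x) - (a - x)‖^2 ≤ 500*((n:ℝ)+1)*r*δ := by
      have hv1 := abs_le.1 hvax
      have hN2 : ‖a - x‖^2 ≤ (‖ty‖ + 5*δ)^2 := by
        nlinarith [hax, norm_nonneg (a - x), norm_nonneg ty, hδ.le]
      have h8 : 100*((n:ℝ)+1)*δ ≤ r/8 := by linarith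
      have h9b : (100*((n:ℝ)+1)*δ)^2 ≤ (r/8)*(100*((n:ℝ)+1)*δ) := by
        nlinarith [h8, mul_nonneg hn0 hδ.le, hδ.le]
      have hdty : δ*‖ty‖ ≤ δ*r :=
        mul_le_mul_of_nonneg_left (le_of_lt (lt_of_le_of_lt htyle hvr)) hδ.le
      have h25 : 25*δ^2 ≤ r*δ := by nlinarith [mul_le_mul_of_nonneg_left hδr' hδ.le]
      have hb1 : (0:ℝ) ≤ r*δ := by positivity
      have hb2 : (0:ℝ) ≤ (n:ℝ)*(r*δ) := by positivity
      linarith [hexp, hv1.1, hN2, hty2, h9, h9b, hdty, h25, hb1, hb2]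
    have h2 := Real.sqrt_le_sqrt hsq
    rwa [Real.sqrt_sq (norm_nonneg _)] at h2



-- real new material
lemma exists_plane (n d : ℕ) (hnd : n < d) (x : EuclideanSpace ℝ (Fin d)) :
    ∃ Γ : AffineSubspace ℝ (EuclideanSpace ℝ (Fin d)), x ∈ Γ ∧
      Module.finrank ℝ Γ.direction = n := by
  set u : Fin n → EuclideanSpace ℝ (Fin d) :=
    fun i => EuclideanSpace.single (Fin.castLE hnd.le i) (1:ℝ) with hu
  have hG : ∀ i j, |⟪u i, u j⟫ - (if i = j then (1:ℝ)^2 else 0)| ≤ 0 := by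
    intro i j
    have h1 : ⟪u i, u j⟫ = if i = j then (1:ℝ) else 0 := by
      rw [hu]
      simp only [EuclideanSpace.inner_single_right, EuclideanSpace.single_apply]
      rcases eq_or_ne i j with h | h
      · subst h; simp
      · have hc : Fin.castLE hnd.le j ≠ Fin.castLE hnd.le i :=
          fun hc => h ((Fin.castLE_injective hnd.le) hc).symm
        simp [h, hc]
    rw [h1]
    rcases eq_or_ne i j with h | h <;> simp [h]
  have hlin := my_linindep u (le_refl (0:ℝ)) (by norm_num) hG
  refine ⟨AffineSubspace.mk' x (Submodule.span ℝ (Set.range u)),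
    AffineSubspace.self_mem_mk' _ _, ?_⟩
  rw [AffineSubspace.direction_mk', finrank_span_eq_card hlin]
  simp

lemma planeHD_le_two {d : ℕ} (S : Set (EuclideanSpace ℝ (Fin d)))
    (Γ : AffineSubspace ℝ (EuclideanSpace ℝ (Fin d))) (x : EuclideanSpace ℝ (Fin d))
    (r : ℝ) (hr : 0 < r) (hx : x ∈ S) (hxΓ : x ∈ Γ) : planeHD S Γ x r ≤ 2 := by
  rw [planeHD]
  have h : Metric.hausdorffDist (S ∩ ball x r) ((Γ : Set _) ∩ ball x r) ≤ 2*r := by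
    refine Metric.hausdorffDist_le_of_mem_dist (by linarith) ?_ ?_
    · intro q hq
      exact ⟨x, ⟨hxΓ, mem_ball_self hr⟩, by linarith [mem_ball.1 hq.2]⟩
    · intro w hw
      exact ⟨x, ⟨hx, mem_ball_self hr⟩, by linarith [mem_ball.1 hw.2]⟩
  calc r⁻¹ * Metric.hausdorffDist (S ∩ ball x r) ((Γ : Set _) ∩ ball x r)
      ≤ r⁻¹ * (2*r) := mul_le_mul_of_nonneg_left h (inv_nonneg.2 hr.le)
    _ = 2 := by field_simp
    
lemma alphaNum_nonneg (n : ℕ) {d : ℕ} (S : Set (EuclideanSpace ℝ (Fin d)))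
    (x : EuclideanSpace ℝ (Fin d)) (r : ℝ) (hr : 0 < r) : 0 ≤ alphaNum n S x r := by
  apply Real.sInf_nonneg
  rintro t ⟨Γ, _, _, rfl⟩
  exact mul_nonneg (inv_nonneg.2 hr.le) Metric.hausdorffDist_nonneg

lemma alphaNum_le (n : ℕ) {d : ℕ} (S : Set (EuclideanSpace ℝ (Fin d)))
    (Γ : AffineSubspace ℝ (EuclideanSpace ℝ (Fin d))) (x : EuclideanSpace ℝ (Fin d))
    (r : ℝ) (hr : 0 < r) (hxΓ : x ∈ Γ) (hrank : Module.finrank ℝ Γ.direction = n) :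
    alphaNum n S x r ≤ planeHD S Γ x r := by
  apply csInf_le
  · refine ⟨0, ?_⟩
    rintro t ⟨Γ', _, _, rfl⟩
    exact mul_nonneg (inv_nonneg.2 hr.le) Metric.hausdorffDist_nonneg
  · exact ⟨Γ, hxΓ, hrank, rfl⟩

lemma my_key (n d : ℕ) (hnd : n < d) (S : Set (EuclideanSpace ℝ (Fin d)))
    (x : EuclideanSpace ℝ (Fin d)) (hx : x ∈ S) (r δ : ℝ) (hr : 0 < r) (hδpos : 0 < δ)
    (M : MetricSpace ((↥(S ∩ ball x r)) ⊕ (↥(ball (0:EuclideanSpace ℝ (Fin n)) r))))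
    (h1 : ∀ a b : ↥(S ∩ ball x r),
      @dist _ M.toPseudoMetricSpace.toDist (Sum.inl a) (Sum.inl b) = dist a b)
    (h2 : ∀ a b : ↥(ball (0:EuclideanSpace ℝ (Fin n)) r),
      @dist _ M.toPseudoMetricSpace.toDist (Sum.inr a) (Sum.inr b) = dist a b)
    (hhd : @Metric.hausdorffDist _ M.toPseudoMetricSpace
      (Set.range Sum.inl) (Set.range Sum.inr) < δ) :
    r * alphaNum n S x r ^ 2 ≤ 3200*((n:ℝ)+1) * δ := by
  letI := M
  have hn0 : (0:ℝ) ≤ n := Nat.cast_nonneg n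
  have hxX : x ∈ S ∩ ball x r := ⟨hx, mem_ball_self hr⟩
  have hα0 := alphaNum_nonneg n S x r hr
  by_cases hcase : 800*((n:ℝ)+1)*δ ≤ r
  · -- main case : build the correspondence
    haveI hNX : Nonempty ↥(S ∩ ball x r) := ⟨⟨x, hxX⟩⟩
    haveI hNY : Nonempty ↥(ball (0:EuclideanSpace ℝ (Fin n)) r) := ⟨⟨0, mem_ball_self hr⟩⟩
    have hfin : EMetric.hausdorffEdist (Set.range (Sum.inl :
          ↥(S ∩ ball x r) → ↥(S ∩ ball x r) ⊕ ↥(ball (0:EuclideanSpace ℝ (Fin n)) r)))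
        (Set.range Sum.inr) ≠ ⊤ := by
      apply Metric.hausdorffEdist_ne_top_of_nonempty_of_bounded (Set.range_nonempty _)
        (Set.range_nonempty _)
      · rw [Metric.isBounded_iff]
        refine ⟨2*r, ?_⟩
        rintro _ ⟨a, rfl⟩ _ ⟨b, rfl⟩
        rw [h1, Subtype.dist_eq]
        calc dist (a:EuclideanSpace ℝ (Fin d)) b ≤ dist (a:EuclideanSpace ℝ (Fin d)) x
              + dist x (b:EuclideanSpace ℝ (Fin d)) := dist_triangle _ _ _
          _ ≤ 2*r := by
              have ha := mem_ball.1 a.2.2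
              have hb := mem_ball.1 b.2.2
              rw [dist_comm x _]
              linarith
      · rw [Metric.isBounded_iff]
        refine ⟨2*r, ?_⟩
        rintro _ ⟨a, rfl⟩ _ ⟨b, rfl⟩
        rw [h2, Subtype.dist_eq]
        calc dist (a:EuclideanSpace ℝ (Fin n)) b ≤ dist (a:EuclideanSpace ℝ (Fin n)) 0
              + dist 0 (b:EuclideanSpace ℝ (Fin n)) := dist_triangle _ _ _
          _ ≤ 2*r := by
              have ha := mem_ball.1 a.2
              have hb := mem_ball.1 b.2
              rw [dist_comm (0:EuclideanSpace ℝ (Fin n)) _]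
              linarith
    set R : EuclideanSpace ℝ (Fin d) → EuclideanSpace ℝ (Fin n) → Prop :=
      fun a y => ∃ (ha : a ∈ S ∩ ball x r) (hy : y ∈ ball (0:EuclideanSpace ℝ (Fin n)) r),
        dist (Sum.inl ⟨a, ha⟩ : ↥(S ∩ ball x r) ⊕ ↥(ball (0:EuclideanSpace ℝ (Fin n)) r))
          (Sum.inr ⟨y, hy⟩) < δ with hR
    have Hc : ∀ a y a' y', R a y → R a' y' → |dist a a' - dist y y'| ≤ 2*δ := by
      rintro a y a' y' ⟨ha, hy, hd⟩ ⟨ha', hy', hd'⟩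
      have e1 : dist a a' = dist (Sum.inl ⟨a,ha⟩ :
          ↥(S ∩ ball x r) ⊕ ↥(ball (0:EuclideanSpace ℝ (Fin n)) r)) (Sum.inl ⟨a',ha'⟩) := by
        rw [h1, Subtype.dist_eq]
      have e2 : dist y y' = dist (Sum.inr ⟨y,hy⟩ :
          ↥(S ∩ ball x r) ⊕ ↥(ball (0:EuclideanSpace ℝ (Fin n)) r)) (Sum.inr ⟨y',hy'⟩) := by
        rw [h2, Subtype.dist_eq]
      rw [e1, e2, abs_le]
      constructor
      · have t1 := dist_triangle4 (Sum.inr ⟨y,hy⟩ :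
          ↥(S ∩ ball x r) ⊕ ↥(ball (0:EuclideanSpace ℝ (Fin n)) r)) (Sum.inl ⟨a,ha⟩)
          (Sum.inl ⟨a',ha'⟩) (Sum.inr ⟨y',hy'⟩)
        have c1 := dist_comm (Sum.inr ⟨y,hy⟩ :
          ↥(S ∩ ball x r) ⊕ ↥(ball (0:EuclideanSpace ℝ (Fin n)) r)) (Sum.inl ⟨a,ha⟩)
        linarith
      · have t1 := dist_triangle4 (Sum.inl ⟨a,ha⟩ :
          ↥(S ∩ ball x r) ⊕ ↥(ball (0:EuclideanSpace ℝ (Fin n)) r)) (Sum.inr ⟨y,hy⟩)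
          (Sum.inr ⟨y',hy'⟩) (Sum.inl ⟨a',ha'⟩)
        have c1 := dist_comm (Sum.inr ⟨y',hy'⟩ :
          ↥(S ∩ ball x r) ⊕ ↥(ball (0:EuclideanSpace ℝ (Fin n)) r)) (Sum.inl ⟨a',ha'⟩)
        linarith
    have HX : ∀ a ∈ S ∩ ball x r, ∃ y : EuclideanSpace ℝ (Fin n), ‖y‖ < r ∧ R a y := by
      intro a ha
      obtain ⟨b, hbr, hdb⟩ := Metric.exists_dist_lt_of_hausdorffDist_lt
        (show (Sum.inl ⟨a, ha⟩ : ↥(S ∩ ball x r) ⊕ ↥(ball (0:EuclideanSpace ℝ (Fin n)) r))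
          ∈ Set.range Sum.inl from ⟨_, rfl⟩) hhd hfin
      obtain ⟨yb, rfl⟩ := hbr
      exact ⟨yb.1, mem_ball_zero_iff.1 yb.2, ha, yb.2, hdb⟩
    have HY : ∀ y : EuclideanSpace ℝ (Fin n), ‖y‖ < r → ∃ a ∈ S ∩ ball x r, R a y := by
      intro y hy
      have hy' : y ∈ ball (0:EuclideanSpace ℝ (Fin n)) r := mem_ball_zero_iff.2 hy
      obtain ⟨c, hcr, hdc⟩ := Metric.exists_dist_lt_of_hausdorffDist_lt'
        (show (Sum.inr ⟨y, hy'⟩ : ↥(S ∩ ball x r) ⊕ ↥(ball (0:EuclideanSpace ℝ (Fin n)) r))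
          ∈ Set.range Sum.inr from ⟨_, rfl⟩) hhd hfin
      obtain ⟨ac, rfl⟩ := hcr
      exact ⟨ac.1, ac.2, ac.2, hy', hdc⟩
    obtain ⟨Γ, hxΓ, hrank, hhd2⟩ := my_core n d S x hx r δ hr hδpos hcase R Hc HX HY
    have hα := le_trans (alphaNum_le n S Γ x r hr hxΓ hrank)
      (by exact mul_le_mul_of_nonneg_left hhd2 (inv_nonneg.2 hr.le) :
        planeHD S Γ x r ≤ r⁻¹ * Real.sqrt (500*((n:ℝ)+1)*r*δ))
    have hsq : alphaNum n S x r ^ 2 ≤ (r⁻¹ * Real.sqrt (500*((n:ℝ)+1)*r*δ))^2 :=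
      pow_le_pow_left₀ hα0 hα 2
    have hval : (r⁻¹ * Real.sqrt (500*((n:ℝ)+1)*r*δ))^2 = (r⁻¹)^2 * (500*((n:ℝ)+1)*r*δ) := by
      rw [mul_pow, Real.sq_sqrt (by positivity)]
    have hfin2 : r * ((r⁻¹)^2 * (500*((n:ℝ)+1)*r*δ)) = 500*((n:ℝ)+1)*δ := by
      field_simp
    calc r * alphaNum n S x r ^ 2 ≤ r * ((r⁻¹)^2 * (500*((n:ℝ)+1)*r*δ)) := by
          rw [← hval]
          exact mul_le_mul_of_nonneg_left (le_trans hsq (le_of_eq rfl)) hr.le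
      _ = 500*((n:ℝ)+1)*δ := hfin2
      _ ≤ 3200*((n:ℝ)+1)*δ := by nlinarith [hδpos.le, hn0]
  · -- degenerate case
    obtain ⟨Γ, hxΓ, hrank⟩ := exists_plane n d hnd x
    have hle := le_trans (alphaNum_le n S Γ x r hr hxΓ hrank)
      (planeHD_le_two S Γ x r hr hx hxΓ)
    have h4 : alphaNum n S x r ^2 ≤ 4 := by nlinarith
    have h5 : r < 800*((n:ℝ)+1)*δ := lt_of_not_ge hcase
    nlinarith [mul_le_mul_of_nonneg_left h4 hr.le]




theorem stmt13 (n : ℕ) :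
    ∃ C : ℝ, 0 < C ∧
      ∀ (d : ℕ) (S : Set (EuclideanSpace ℝ (Fin d))),
        n < d → IsClosed S →
        ∀ x ∈ S, ∀ r : ℝ, 0 < r →
          (alphaNum n S x r) ^ 2 ≤ C * aTilde n S x r := by
  refine ⟨3200*((n:ℝ)+1), by positivity, ?_⟩
  intro d S hnd _hS x hx r hr
  have hxX : x ∈ S ∩ ball x r := ⟨hx, mem_ball_self hr⟩
  haveI hNX : Nonempty ↥(S ∩ ball x r) := ⟨⟨x, hxX⟩⟩
  haveI hNY : Nonempty ↥(ball (0:EuclideanSpace ℝ (Fin n)) r) := ⟨⟨0, mem_ball_self hr⟩⟩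
  set Gs := {t : ℝ |
    ∃ M : MetricSpace (↥(S ∩ ball x r) ⊕ ↥(ball (0:EuclideanSpace ℝ (Fin n)) r)),
    (∀ a b : ↥(S ∩ ball x r),
      @dist _ M.toPseudoMetricSpace.toDist (Sum.inl a) (Sum.inl b) = dist a b) ∧
    (∀ a b : ↥(ball (0:EuclideanSpace ℝ (Fin n)) r),
      @dist _ M.toPseudoMetricSpace.toDist (Sum.inr a) (Sum.inr b) = dist a b) ∧
    @Metric.hausdorffDist _ M.toPseudoMetricSpace
      (Set.range Sum.inl) (Set.range Sum.inr) ≤ t} with hGs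
  have hgh : ghDist (↥(S ∩ ball x r)) (↥(ball (0:EuclideanSpace ℝ (Fin n)) r)) = sInf Gs := rfl
  have hbdd : BddBelow Gs := by
    refine ⟨0, ?_⟩
    rintro t ⟨M, _, _, hM⟩
    exact le_trans (@Metric.hausdorffDist_nonneg _ M.toPseudoMetricSpace _ _) hM
  have hXb : ∀ u v : ↥(S ∩ ball x r), dist u v ≤ 2*r := by
    intro u v
    rw [Subtype.dist_eq]
    have hu := mem_ball.1 u.2.2
    have hv := mem_ball.1 v.2.2
    calc dist (u:EuclideanSpace ℝ (Fin d)) v ≤ dist (u:EuclideanSpace ℝ (Fin d)) x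
          + dist x (v:EuclideanSpace ℝ (Fin d)) := dist_triangle _ _ _
      _ ≤ 2*r := by rw [dist_comm x]; linarith
  have hYb : ∀ u v : ↥(ball (0:EuclideanSpace ℝ (Fin n)) r), dist u v ≤ 2*r := by
    intro u v
    rw [Subtype.dist_eq]
    have hu := mem_ball.1 u.2
    have hv := mem_ball.1 v.2
    calc dist (u:EuclideanSpace ℝ (Fin n)) v ≤ dist (u:EuclideanSpace ℝ (Fin n)) 0
          + dist 0 (v:EuclideanSpace ℝ (Fin n)) := dist_triangle _ _ _
      _ ≤ 2*r := by rw [dist_comm (0:EuclideanSpace ℝ (Fin n))]; linarith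
  have hne : Gs.Nonempty := by
    refine ⟨4*r + 1, Metric.metricSpaceSum, fun a b => rfl, fun a b => rfl, ?_⟩
    letI : MetricSpace (↥(S ∩ ball x r) ⊕ ↥(ball (0:EuclideanSpace ℝ (Fin n)) r)) :=
      Metric.metricSpaceSum
    refine Metric.hausdorffDist_le_of_mem_dist (by linarith) ?_ ?_
    · rintro _ ⟨a, rfl⟩
      refine ⟨Sum.inr ⟨0, mem_ball_self hr⟩, ⟨_, rfl⟩, ?_⟩
      have he : dist (Sum.inl a : ↥(S ∩ ball x r) ⊕ ↥(ball (0:EuclideanSpace ℝ (Fin n)) r))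
          (Sum.inr ⟨0, mem_ball_self hr⟩)
          = dist a (Nonempty.some ⟨a⟩) + 1
            + dist (Nonempty.some ⟨(⟨0, mem_ball_self hr⟩ :
                ↥(ball (0:EuclideanSpace ℝ (Fin n)) r))⟩) (⟨0, mem_ball_self hr⟩ :
                ↥(ball (0:EuclideanSpace ℝ (Fin n)) r)) := rfl
      rw [he]
      linarith [hXb a (Nonempty.some ⟨a⟩),
        hYb (Nonempty.some ⟨(⟨0, mem_ball_self hr⟩ :
          ↥(ball (0:EuclideanSpace ℝ (Fin n)) r))⟩) ⟨0, mem_ball_self hr⟩]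
    · rintro _ ⟨b, rfl⟩
      refine ⟨Sum.inl ⟨x, hxX⟩, ⟨_, rfl⟩, ?_⟩
      have he : dist (Sum.inr b : ↥(S ∩ ball x r) ⊕ ↥(ball (0:EuclideanSpace ℝ (Fin n)) r))
          (Sum.inl ⟨x, hxX⟩)
          = dist b (Nonempty.some ⟨b⟩) + 1
            + dist (Nonempty.some ⟨(⟨x, hxX⟩ : ↥(S ∩ ball x r))⟩)
                (⟨x, hxX⟩ : ↥(S ∩ ball x r)) := rfl
      rw [he]
      linarith [hYb b (Nonempty.some ⟨b⟩),
        hXb (Nonempty.some ⟨(⟨x, hxX⟩ : ↥(S ∩ ball x r))⟩) ⟨x, hxX⟩]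
  have hKpos : (0:ℝ) < 3200*((n:ℝ)+1) := by positivity
  have hkey : ∀ δ, sInf Gs < δ → r * alphaNum n S x r ^2 ≤ 3200*((n:ℝ)+1)*δ := by
    intro δ hδ
    obtain ⟨t, ⟨M, hM1, hM2, hM3⟩, htδ⟩ := (csInf_lt_iff hbdd hne).1 hδ
    have hδpos : 0 < δ := lt_of_le_of_lt
      (le_trans (@Metric.hausdorffDist_nonneg _ M.toPseudoMetricSpace _ _) hM3) htδ
    exact my_key n d hnd S x hx r δ hr hδpos M hM1 hM2 (lt_of_le_of_lt hM3 htδ)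
  have hmain : r * alphaNum n S x r ^2 ≤ 3200*((n:ℝ)+1) * sInf Gs := by
    by_contra hcon
    push_neg at hcon
    have hd2 : 0 < (r * alphaNum n S x r^2 - 3200*((n:ℝ)+1)*sInf Gs)/(3200*((n:ℝ)+1)) :=
      div_pos (by linarith) hKpos
    have h2 := hkey (sInf Gs
      + (r * alphaNum n S x r^2 - 3200*((n:ℝ)+1)*sInf Gs)/(3200*((n:ℝ)+1))/2) (by linarith)
    have h3 : 3200*((n:ℝ)+1) * (sInf Gs
        + (r * alphaNum n S x r^2 - 3200*((n:ℝ)+1)*sInf Gs)/(3200*((n:ℝ)+1))/2)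
        = 3200*((n:ℝ)+1)*sInf Gs + (r*alphaNum n S x r^2 - 3200*((n:ℝ)+1)*sInf Gs)/2 := by
      field_simp
    rw [h3] at h2
    linarith
  have hfin : alphaNum n S x r ^2 ≤ 3200*((n:ℝ)+1) * (r⁻¹ * sInf Gs) := by
    have he : 3200*((n:ℝ)+1) * (r⁻¹ * sInf Gs) = (3200*((n:ℝ)+1) * sInf Gs)/r := by
      field_simp
    rw [he, le_div_iff₀ hr]
    linarith
  show alphaNum n S x r ^2 ≤ 3200*((n:ℝ)+1) * aTilde n S x r
  rw [aTilde, hgh]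
  exact hfin

end
end

section
/- Let ε ∈ (0,1/2), let P = (√(1−ε²), ε) and Q = (−√(1−ε²), ε) in ℝ², and let S ⊂ ℝ² be the union of the two closed segments joining P and Q to the origin O. Then, with n = 1, one has ã(O,1) ≤ 4ε². -/
open Metric Set

noncomputable section

namespace S17

abbrev E2 := EuclideanSpace ℝ (Fin 2)
abbrev E1 := EuclideanSpace ℝ (Fin 1)

variable (ε : ℝ)

def Pp : E2 := (EuclideanSpace.equiv (Fin 2) ℝ).symm ![Real.sqrt (1 - ε ^ 2), ε]
def Qq : E2 := (EuclideanSpace.equiv (Fin 2) ℝ).symm ![-Real.sqrt (1 - ε ^ 2), ε]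
def par (a : E2) : ℝ := if 0 ≤ a 0 then ‖a‖ else -‖a‖
def Sset : Set E2 := segment ℝ 0 (Pp ε) ∪ segment ℝ 0 (Qq ε)
def spec (t : ℝ) (a : E2) : Prop := (0 ≤ t ∧ a = t • Pp ε) ∨ (t ≤ 0 ∧ a = (-t) • Qq ε)

lemma Pp0 : Pp ε 0 = Real.sqrt (1 - ε^2) := rfl
lemma Pp1 : Pp ε 1 = ε := rfl
lemma Qq0 : Qq ε 0 = -Real.sqrt (1 - ε^2) := rfl
lemma Qq1 : Qq ε 1 = ε := rfl
lemma smulP0 (θ : ℝ) : (θ • Pp ε) 0 = θ * Real.sqrt (1 - ε^2) := rfl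
lemma smulQ0 (θ : ℝ) : (θ • Qq ε) 0 = θ * (-Real.sqrt (1 - ε^2)) := rfl

lemma mem_seg {p : E2} {θ : ℝ} (h0 : 0 ≤ θ) (h1 : θ ≤ 1) : θ • p ∈ segment ℝ 0 p := by
  rw [segment_eq_image]
  exact ⟨θ, ⟨h0, h1⟩, by simp⟩

lemma seg_mem {p : E2} {a : E2} (h : a ∈ segment ℝ 0 p) :
    ∃ θ : ℝ, 0 ≤ θ ∧ θ ≤ 1 ∧ a = θ • p := by
  rw [segment_eq_image] at h
  obtain ⟨θ, hθ, h⟩ := h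
  exact ⟨θ, hθ.1, hθ.2, by rw [← h]; simp⟩

lemma par_abs (a : E2) : |par a| = ‖a‖ := by
  unfold par; split
  · exact abs_of_nonneg (norm_nonneg a)
  · rw [abs_neg]; exact abs_of_nonneg (norm_nonneg a)

lemma normE1 (y : E1) : ‖y‖ = |y 0| := by
  rw [EuclideanSpace.norm_eq, Fin.sum_univ_one, Real.norm_eq_abs, sq_abs,
    Real.sqrt_sq_eq_abs]

lemma distE1 (x y : E1) : dist x y = |x 0 - y 0| := by
  rw [EuclideanSpace.dist_eq, Fin.sum_univ_one, Real.dist_eq, sq_abs,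
    Real.sqrt_sq_eq_abs]

variable (hε : ε ∈ Set.Ioo (0:ℝ) (1/2))
include hε

lemma eps2lt : ε^2 < 1 := by nlinarith [hε.1, hε.2]

lemma csq : (Real.sqrt (1 - ε^2))^2 = 1 - ε^2 :=
  Real.sq_sqrt (by nlinarith [eps2lt ε hε])

lemma cpos : 0 < Real.sqrt (1 - ε^2) := Real.sqrt_pos.2 (by nlinarith [eps2lt ε hε])

lemma normP : ‖Pp ε‖ = 1 := by
  rw [EuclideanSpace.norm_eq, Fin.sum_univ_two, Pp0, Pp1]
  rw [show ‖Real.sqrt (1-ε^2)‖^2 + ‖ε‖^2 = 1 by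
    simp only [Real.norm_eq_abs, sq_abs]; rw [csq ε hε]; ring]
  exact Real.sqrt_one

lemma normQ : ‖Qq ε‖ = 1 := by
  rw [EuclideanSpace.norm_eq, Fin.sum_univ_two, Qq0, Qq1]
  rw [show ‖-Real.sqrt (1-ε^2)‖^2 + ‖ε‖^2 = 1 by
    simp only [Real.norm_eq_abs, sq_abs, abs_neg]; rw [csq ε hε]; ring]
  exact Real.sqrt_one

lemma innerPQ : (inner ℝ (Pp ε) (Qq ε) : ℝ) = 2*ε^2 - 1 := by
  rw [PiLp.inner_apply]
  simp only [RCLike.inner_apply, conj_trivial]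
  rw [Fin.sum_univ_two, Pp0, Pp1, Qq0, Qq1]
  have := csq ε hε
  nlinarith [this]

lemma distPP (t s : ℝ) : dist (t • Pp ε) (s • Pp ε) = |t - s| := by
  rw [dist_eq_norm, ← sub_smul, norm_smul, Real.norm_eq_abs, normP ε hε, mul_one]

lemma distQQ (t s : ℝ) : dist (t • Qq ε) (s • Qq ε) = |t - s| := by
  rw [dist_eq_norm, ← sub_smul, norm_smul, Real.norm_eq_abs, normQ ε hε, mul_one]

lemma cross_le (t s : ℝ) (ht : 0 ≤ t) (hs : 0 ≤ s) :
    dist (t • Pp ε) (s • Qq ε) ≤ t + s := by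
  calc dist (t • Pp ε) (s • Qq ε) ≤ dist (t • Pp ε) 0 + dist 0 (s • Qq ε) :=
        dist_triangle _ _ _
    _ = t + s := by
        rw [dist_zero_right, dist_zero_left, norm_smul, norm_smul, Real.norm_eq_abs,
          Real.norm_eq_abs, normP ε hε, normQ ε hε, abs_of_nonneg ht, abs_of_nonneg hs,
          mul_one, mul_one]

lemma cross_sq (t s : ℝ) :
    (dist (t • Pp ε) (s • Qq ε))^2 = t^2 + s^2 - 2*t*s*(2*ε^2-1) := by
  rw [dist_eq_norm, norm_sub_sq_real, norm_smul, norm_smul, real_inner_smul_left,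
    real_inner_smul_right, Real.norm_eq_abs, Real.norm_eq_abs, normP ε hε, normQ ε hε,
    innerPQ ε hε]
  rw [mul_one, mul_one, sq_abs, sq_abs]
  ring

lemma cross_ge (t s : ℝ) (ht : 0 ≤ t) (ht1 : t ≤ 1) (hs : 0 ≤ s) (hs1 : s ≤ 1) :
    t + s - 4*ε^2 ≤ dist (t • Pp ε) (s • Qq ε) := by
  set d := dist (t • Pp ε) (s • Qq ε) with hd
  have hd0 : 0 ≤ d := dist_nonneg
  have hd2 : d^2 = t^2 + s^2 - 2*t*s*(2*ε^2-1) := cross_sq ε hε t s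
  rcases le_or_gt (t+s) (4*ε^2) with h | h
  · linarith
  · nlinarith [hd2, hd0, h, hε.1, mul_nonneg hs (sub_nonneg.2 ht1),
      mul_pos hε.1 hε.1, sq_nonneg (d - (t+s-4*ε^2)), sq_nonneg (d + (t+s-4*ε^2))]

lemma parP {θ : ℝ} (h0 : 0 ≤ θ) : par (θ • Pp ε) = θ := by
  unfold par
  rw [if_pos]
  · rw [norm_smul, Real.norm_eq_abs, normP ε hε, mul_one, abs_of_nonneg h0]
  · rw [smulP0]
    have := le_of_lt (cpos ε hε)
    positivity

lemma parQ {θ : ℝ} (h0 : 0 < θ) : par (θ • Qq ε) = -θ := by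
  unfold par
  rw [if_neg]
  · rw [norm_smul, Real.norm_eq_abs, normQ ε hε, mul_one, abs_of_pos h0]
  · rw [smulQ0]
    push_neg
    have := cpos ε hε
    nlinarith

lemma paramSpec {a : E2} (ha : a ∈ Sset ε) : spec ε (par a) a := by
  rcases ha with h | h
  · obtain ⟨θ, h0, h1, rfl⟩ := seg_mem h
    rw [parP ε hε h0]
    exact Or.inl ⟨h0, rfl⟩
  · obtain ⟨θ, h0, h1, rfl⟩ := seg_mem h
    rcases eq_or_lt_of_le h0 with rfl | hpos
    · rw [zero_smul]
      show spec ε (par 0) 0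
      have : par (0:E2) = 0 := by unfold par; simp
      rw [this]
      exact Or.inl ⟨le_refl 0, by simp⟩
    · rw [parQ ε hε hpos]
      exact Or.inr ⟨by linarith, by rw [neg_neg]⟩

lemma key1 {a b : E2} (ha : a ∈ Sset ε) (hb : b ∈ Sset ε) :
    dist a b ≤ |par a - par b| := by
  set t := par a with ht
  set s := par b with hs
  rcases paramSpec ε hε ha with ⟨h0, he⟩ | ⟨h0, he⟩ <;>
    rcases paramSpec ε hε hb with ⟨g0, ge⟩ | ⟨g0, ge⟩
  · rw [he, ge, distPP ε hε]
  · rw [he, ge, abs_of_nonneg (by linarith : (0:ℝ) ≤ t - s)]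
    have := cross_le ε hε t (-s) h0 (by linarith)
    linarith
  · rw [he, ge, dist_comm, abs_of_nonpos (by linarith : t - s ≤ 0)]
    have := cross_le ε hε s (-t) g0 (by linarith)
    linarith
  · rw [he, ge, distQQ ε hε, show -t - -s = s - t by ring, abs_sub_comm]

lemma key2 {a b : E2} (ha : a ∈ Sset ε) (hb : b ∈ Sset ε)
    (hna : ‖a‖ ≤ 1) (hnb : ‖b‖ ≤ 1) :
    |par a - par b| ≤ dist a b + 4*ε^2 := by
  have hta : |par a| ≤ 1 := by rw [par_abs]; exact hna
  have htb : |par b| ≤ 1 := by rw [par_abs]; exact hnb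
  rw [abs_le] at hta htb
  have hε2 : (0:ℝ) ≤ 4*ε^2 := by positivity
  set t := par a with ht
  set s := par b with hs
  rcases paramSpec ε hε ha with ⟨h0, he⟩ | ⟨h0, he⟩ <;>
    rcases paramSpec ε hε hb with ⟨g0, ge⟩ | ⟨g0, ge⟩
  · rw [he, ge, distPP ε hε]; linarith
  · rw [he, ge, abs_of_nonneg (by linarith : (0:ℝ) ≤ t - s)]
    have := cross_ge ε hε t (-s) h0 hta.2 (by linarith) (by linarith [htb.1])
    linarith
  · rw [he, ge, dist_comm, abs_of_nonpos (by linarith : t - s ≤ 0)]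
    have := cross_ge ε hε s (-t) g0 htb.2 (by linarith) (by linarith [hta.1])
    linarith
  · rw [he, ge, distQQ ε hε, show -t - -s = s - t by ring, abs_sub_comm]
    linarith

abbrev Xt := ↥(Sset ε ∩ Metric.ball (0:E2) 1)
abbrev Yt := ↥(Metric.ball (0:E1) 1)

omit hε

instance : Nonempty (Xt ε) :=
  ⟨⟨0, ⟨Or.inl (left_mem_segment ℝ 0 (Pp ε)), mem_ball_self one_pos⟩⟩⟩

def fmap (a : Xt ε) : Yt :=
  ⟨WithLp.toLp 2 (fun _ => par a.1), by
    rw [mem_ball_zero_iff, normE1]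
    show |par a.1| < 1
    rw [par_abs]
    exact mem_ball_zero_iff.1 a.2.2⟩

lemma dist_fmap (a b : Xt ε) : dist (fmap ε a) (fmap ε b) = |par a.1 - par b.1| := by
  rw [Subtype.dist_eq, distE1]; rfl

lemma distX (a b : Xt ε) : dist a b = dist a.1 b.1 := Subtype.dist_eq a b

def crossD (a : Xt ε) (b : Yt) : ℝ :=
  ⨅ x : Xt ε, (dist a x + 2*ε^2 + dist (fmap ε x) b)

lemma crossD_bdd (a : Xt ε) (b : Yt) :
    BddBelow (Set.range fun x : Xt ε => dist a x + 2*ε^2 + dist (fmap ε x) b) := by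
  refine ⟨0, ?_⟩
  rintro r ⟨x, rfl⟩
  have := dist_nonneg (x := a) (y := x)
  have := dist_nonneg (x := fmap ε x) (y := b)
  positivity

lemma crossD_le (a : Xt ε) (b : Yt) (x : Xt ε) :
    crossD ε a b ≤ dist a x + 2*ε^2 + dist (fmap ε x) b :=
  ciInf_le (crossD_bdd ε a b) x

lemma le_crossD {c : ℝ} (a : Xt ε) (b : Yt)
    (h : ∀ x : Xt ε, c ≤ dist a x + 2*ε^2 + dist (fmap ε x) b) : c ≤ crossD ε a b :=
  le_ciInf h

lemma crossD_pos (hε0 : 0 < ε) (a : Xt ε) (b : Yt) : 0 < crossD ε a b := by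
  have h2 : (0:ℝ) < 2*ε^2 := by positivity
  refine lt_of_lt_of_le h2 (le_crossD ε a b fun x => ?_)
  have := dist_nonneg (x := a) (y := x)
  have := dist_nonneg (x := fmap ε x) (y := b)
  linarith

include hε

lemma fkey1 (x y : Xt ε) : dist x y ≤ dist (fmap ε x) (fmap ε y) := by
  rw [dist_fmap, distX]
  exact key1 ε hε x.2.1 y.2.1

lemma fkey2 (x y : Xt ε) : dist (fmap ε x) (fmap ε y) ≤ dist x y + 4*ε^2 := by
  rw [dist_fmap, distX]
  exact key2 ε hε x.2.1 y.2.1 (le_of_lt (mem_ball_zero_iff.1 x.2.2))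
    (le_of_lt (mem_ball_zero_iff.1 y.2.2))

omit hε in
lemma tri_llr (a a' : Xt ε) (b : Yt) : crossD ε a b ≤ dist a a' + crossD ε a' b := by
  rw [← sub_le_iff_le_add']
  refine le_crossD ε a' b fun x => ?_
  have h := crossD_le ε a b x
  have := dist_triangle a a' x
  linarith

omit hε in
lemma tri_lrr (a : Xt ε) (b b' : Yt) : crossD ε a b ≤ crossD ε a b' + dist b' b := by
  rw [← sub_le_iff_le_add]
  refine le_crossD ε a b' fun x => ?_
  have h := crossD_le ε a b x
  have := dist_triangle (fmap ε x) b' b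
  linarith

lemma tri_lrl (a a' : Xt ε) (b : Yt) : dist a a' ≤ crossD ε a b + crossD ε a' b := by
  rw [← sub_le_iff_le_add']
  refine le_crossD ε a' b fun y => ?_
  rw [sub_le_iff_le_add', ← sub_le_iff_le_add]
  refine le_crossD ε a b fun x => ?_
  have h1 := dist_triangle4 a x y a'
  have h3 := fkey1 ε hε x y
  have h4 := dist_triangle (fmap ε x) b (fmap ε y)
  have h5 : dist b (fmap ε y) = dist (fmap ε y) b := dist_comm _ _
  have h6 : dist y a' = dist a' y := dist_comm _ _
  have h7 := sq_nonneg ε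
  linarith

lemma tri_rlr (a : Xt ε) (b b' : Yt) : dist b b' ≤ crossD ε a b + crossD ε a b' := by
  rw [← sub_le_iff_le_add']
  refine le_crossD ε a b' fun y => ?_
  rw [sub_le_iff_le_add', ← sub_le_iff_le_add]
  refine le_crossD ε a b fun x => ?_
  have h1 := dist_triangle4 b (fmap ε x) (fmap ε y) b'
  have h2 := fkey2 ε hε x y
  have h3 := dist_triangle x a y
  have h4 : dist b (fmap ε x) = dist (fmap ε x) b := dist_comm _ _
  have h5 : dist x a = dist a x := dist_comm _ _
  linarith

def sumDist : (Xt ε ⊕ Yt) → (Xt ε ⊕ Yt) → ℝ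
  | .inl a, .inl b => dist a b
  | .inr a, .inr b => dist a b
  | .inl a, .inr b => crossD ε a b
  | .inr b, .inl a => crossD ε a b

def sumMetric : MetricSpace (Xt ε ⊕ Yt) where
  dist := sumDist ε
  dist_self p := by
    rcases p with a | a
    · exact dist_self a
    · exact dist_self a
  dist_comm p q := by
    rcases p with a | a <;> rcases q with b | b
    · exact dist_comm a b
    · rfl
    · rfl
    · exact dist_comm a b
  dist_triangle p q r := by
    rcases p with a | a <;> rcases q with b | b <;> rcases r with c | c
    · exact dist_triangle a b c
    · exact tri_llr ε a b c
    · exact tri_lrl ε hε a c b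
    · exact tri_lrr ε a c b
    · show crossD ε c a ≤ crossD ε b a + dist b c
      have h := tri_llr ε c b a
      have : dist c b = dist b c := dist_comm _ _
      linarith
    · exact tri_rlr ε hε b a c
    · show crossD ε c a ≤ dist a b + crossD ε c b
      have h := tri_lrr ε c a b
      have : dist b a = dist a b := dist_comm _ _
      linarith
    · exact dist_triangle a b c
  eq_of_dist_eq_zero := by
    intro p q h
    rcases p with a | a <;> rcases q with b | b
    · exact congrArg Sum.inl (eq_of_dist_eq_zero h)
    · exact absurd h (ne_of_gt (crossD_pos ε hε.1 a b))
    · exact absurd h (ne_of_gt (crossD_pos ε hε.1 b a))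
    · exact congrArg Sum.inr (eq_of_dist_eq_zero h)

lemma exists_pre (b : Yt) : ∃ a : Xt ε, fmap ε a = b := by
  have hb1 : ‖(b:E1)‖ < 1 := mem_ball_zero_iff.1 b.2
  rw [normE1] at hb1
  set β := (b:E1) 0 with hβ
  rcases le_or_gt 0 β with h0 | h0
  · have hβ1 : β ≤ 1 := le_of_lt (lt_of_abs_lt hb1)
    refine ⟨⟨β • Pp ε, ⟨Or.inl (mem_seg h0 hβ1), ?_⟩⟩, ?_⟩
    · rw [mem_ball_zero_iff, norm_smul, Real.norm_eq_abs, normP ε hε, mul_one]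
      exact hb1
    · apply Subtype.ext
      ext i
      show par (β • Pp ε) = (b:E1) i
      have hi : i = 0 := Subsingleton.elim i 0
      rw [hi, parP ε hε h0]
  · have habs := abs_lt.1 hb1
    have h1 : -β ≤ 1 := by linarith [habs.1]
    refine ⟨⟨(-β) • Qq ε, ⟨Or.inr (mem_seg (by linarith) h1), ?_⟩⟩, ?_⟩
    · rw [mem_ball_zero_iff, norm_smul, Real.norm_eq_abs, normQ ε hε, mul_one, abs_neg]
      exact hb1
    · apply Subtype.ext
      ext i
      show par ((-β) • Qq ε) = (b:E1) i
      have hi : i = 0 := Subsingleton.elim i 0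
      rw [hi, parQ ε hε (by linarith : 0 < -β), neg_neg]

lemma hd_bound :
    @Metric.hausdorffDist _ (sumMetric ε hε).toPseudoMetricSpace
      (Set.range Sum.inl) (Set.range Sum.inr) ≤ 4*ε^2 := by
  letI M := sumMetric ε hε
  have h24 : 2*ε^2 ≤ 4*ε^2 := by nlinarith [sq_nonneg ε]
  apply hausdorffDist_le_of_mem_dist (by positivity)
  · rintro _ ⟨a, rfl⟩
    refine ⟨Sum.inr (fmap ε a), mem_range_self _, ?_⟩
    show crossD ε a (fmap ε a) ≤ 4*ε^2
    have h := crossD_le ε a (fmap ε a) a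
    rw [dist_self, dist_self] at h
    linarith
  · rintro _ ⟨b, rfl⟩
    obtain ⟨a, ha⟩ := exists_pre ε hε b
    refine ⟨Sum.inl a, mem_range_self _, ?_⟩
    show crossD ε a b ≤ 4*ε^2
    have h := crossD_le ε a b a
    rw [dist_self, ha, dist_self] at h
    linarith

end S17


theorem stmt17 (ε : ℝ) (hε : ε ∈ Set.Ioo (0 : ℝ) (1 / 2))
    (P Q : EuclideanSpace ℝ (Fin 2))
    (hP : P = (EuclideanSpace.equiv (Fin 2) ℝ).symm ![Real.sqrt (1 - ε ^ 2), ε])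
    (hQ : Q = (EuclideanSpace.equiv (Fin 2) ℝ).symm ![-Real.sqrt (1 - ε ^ 2), ε])
    (S : Set (EuclideanSpace ℝ (Fin 2)))
    (hS : S = segment ℝ 0 P ∪ segment ℝ 0 Q) :
    aTilde 1 S 0 1 ≤ 4 * ε ^ 2 := by
  subst hP hQ hS
  show aTilde 1 (S17.Sset ε) 0 1 ≤ 4 * ε ^ 2
  unfold aTilde ghDist
  rw [inv_one, one_mul]
  apply csInf_le
  · refine ⟨0, ?_⟩
    rintro r ⟨M, h1, h2, h3⟩
    exact le_trans (@Metric.hausdorffDist_nonneg _ M.toPseudoMetricSpace _ _) h3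
  · exact ⟨S17.sumMetric ε hε, fun a b => rfl, fun a b => rfl, S17.hd_bound ε hε⟩

end
end
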